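/- For every p ∈ (0,∞) and every finitely supported family {a_Q} of non-negative reals indexed by dyadic cubes, pointwise (∑_Q a_Q 1_Q)^p ≍_p ∑_Q a_Q 1_Q (∑_{R ⊇ Q} a_R 1_R)^{p-1}, with implied constants depending only on p. -/

import Mathlib

open MeasureTheory ENNReal Filter

open scoped Classical

/-- A dyadic cube `2^k([0,1)^d + j)` in `ℝ^d`. -/
structure DyadicCube (d : ℕ) where
  k : ℤ
  j : Fin d → ℤ

/-- The underlying set of a dyadic cube. -/
def DyadicCube.toSet {d : ℕ} (Q : DyadicCube d) : Set (Fin d → ℝ) :=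
  {x | ∀ i, (2:ℝ) ^ Q.k * (Q.j i) ≤ x i ∧ x i < (2:ℝ) ^ Q.k * (Q.j i + 1)}

/-- Two-point comparison: `c (a-b) a^{p-1} ≤ a^p - b^p ≤ C (a-b) a^{p-1}`. -/
lemma two_point {p : ℝ} (hp : 0 < p) {a b : ℝ} (hb : 0 ≤ b) (hab : b ≤ a) :
    min 1 p * ((a - b) * a ^ (p - 1)) ≤ a ^ p - b ^ p ∧
      a ^ p - b ^ p ≤ max 1 p * ((a - b) * a ^ (p - 1)) := by
  have ha : 0 ≤ a := hb.trans hab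
  rcases eq_or_lt_of_le ha with heq | hpos
  · obtain rfl : a = 0 := heq.symm
    obtain rfl : b = 0 := le_antisymm hab hb
    simp [Real.zero_rpow hp.ne']
  have hA : a ^ p = a * a ^ (p - 1) := by
    have h := Real.rpow_add hpos 1 (p - 1)
    rw [show (1:ℝ) + (p - 1) = p by ring, Real.rpow_one] at h
    exact h
  have hs : -1 ≤ b / a - 1 := by
    have : 0 ≤ b / a := div_nonneg hb hpos.le
    linarith
  have hdiv : (b / a) ^ p = b ^ p / a ^ p := Real.div_rpow hb hpos.le p
  have hap : (0:ℝ) < a ^ p := Real.rpow_pos_of_pos hpos p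
  have h3 : b / a * a ^ p = b * a ^ (p - 1) := by
    rw [hA]; field_simp
  have h4 : (1 + p * (b / a - 1)) * a ^ p
      = a ^ p + p * (b * a ^ (p - 1)) - p * (a * a ^ (p - 1)) := by
    rw [← h3, ← hA]; ring
  rcases le_total 1 p with h1 | h1
  · rw [min_eq_left h1, max_eq_right h1]
    constructor
    · have hble : b ^ p ≤ b * a ^ (p - 1) := by
        rcases eq_or_lt_of_le hb with heq0 | hbpos
        · obtain rfl : b = 0 := heq0.symm
          simp [Real.zero_rpow hp.ne']
        · have h2 : b ^ (p - 1) ≤ a ^ (p - 1) :=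
            Real.rpow_le_rpow hb hab (by linarith)
          have hBp : b ^ p = b * b ^ (p - 1) := by
            have h := Real.rpow_add hbpos 1 (p - 1)
            rw [show (1:ℝ) + (p - 1) = p by ring, Real.rpow_one] at h
            exact h
          rw [hBp]
          exact mul_le_mul_of_nonneg_left h2 hb
      calc 1 * ((a - b) * a ^ (p - 1))
          = a * a ^ (p - 1) - b * a ^ (p - 1) := by ring
        _ ≤ a * a ^ (p - 1) - b ^ p := by linarith
        _ = a ^ p - b ^ p := by rw [hA]
    · have hber := one_add_mul_self_le_rpow_one_add hs h1
      rw [show (1:ℝ) + (b / a - 1) = b / a by ring, hdiv] at hber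
      have h2 := mul_le_mul_of_nonneg_right hber hap.le
      rw [div_mul_cancel₀ _ hap.ne', h4] at h2
      have h5 : p * ((a - b) * a ^ (p - 1))
          = p * (a * a ^ (p - 1)) - p * (b * a ^ (p - 1)) := by ring
      linarith
  · rw [min_eq_right h1, max_eq_left h1]
    constructor
    · have hber := rpow_one_add_le_one_add_mul_self hs hp.le h1
      rw [show (1:ℝ) + (b / a - 1) = b / a by ring, hdiv] at hber
      have h2 := mul_le_mul_of_nonneg_right hber hap.le
      rw [div_mul_cancel₀ _ hap.ne', h4] at h2
      have h5 : p * ((a - b) * a ^ (p - 1))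
          = p * (a * a ^ (p - 1)) - p * (b * a ^ (p - 1)) := by ring
      linarith
    · rcases eq_or_lt_of_le hb with heq0 | hbpos
      · obtain rfl : b = 0 := heq0.symm
        rw [Real.zero_rpow hp.ne']
        calc a ^ p - 0 = 1 * ((a - 0) * a ^ (p - 1)) := by rw [hA]; ring
          _ ≤ _ := le_refl _
      · have h2 : a ^ (p - 1) ≤ b ^ (p - 1) :=
          Real.rpow_le_rpow_of_nonpos hbpos hab (by linarith)
        have hBp : b ^ p = b * b ^ (p - 1) := by
          have h := Real.rpow_add hbpos 1 (p - 1)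
          rw [show (1:ℝ) + (p - 1) = p by ring, Real.rpow_one] at h
          exact h
        have h6 : b * a ^ (p - 1) ≤ b * b ^ (p - 1) :=
          mul_le_mul_of_nonneg_left h2 hbpos.le
        calc a ^ p - b ^ p = a * a ^ (p - 1) - b * b ^ (p - 1) := by rw [hA, hBp]
          _ ≤ a * a ^ (p - 1) - b * a ^ (p - 1) := by linarith
          _ = 1 * ((a - b) * a ^ (p - 1)) := by ring

/-- A finite set totally preordered by `r` has a bottom element. -/
lemma exists_bot {ι : Type*} (r : ι → ι → Prop)
    (htrans : ∀ {i j k}, r i j → r j k → r i k) :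
    ∀ s : Finset ι, s.Nonempty → (∀ i ∈ s, ∀ j ∈ s, r i j ∨ r j i) →
      ∃ i ∈ s, ∀ j ∈ s, r i j := by
  intro s
  induction s using Finset.induction_on with
  | empty => rintro ⟨x, hx⟩; simp at hx
  | @insert a s ha ih =>
    intro _ htot
    rcases s.eq_empty_or_nonempty with rfl | hne
    · refine ⟨a, Finset.mem_insert_self _ _, fun j hj => ?_⟩
      simp only [Finset.mem_insert, Finset.notMem_empty, or_false] at hj
      subst hj
      exact (htot _ (Finset.mem_insert_self _ _) _ (Finset.mem_insert_self _ _)).elim id id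
    · obtain ⟨i, hi, hbot⟩ := ih hne
        (fun i hi j hj => htot i (Finset.mem_insert_of_mem hi) j (Finset.mem_insert_of_mem hj))
      rcases htot i (Finset.mem_insert_of_mem hi) a (Finset.mem_insert_self _ _) with h | h
      · refine ⟨i, Finset.mem_insert_of_mem hi, fun j hj => ?_⟩
        rcases Finset.mem_insert.mp hj with rfl | hj
        · exact h
        · exact hbot j hj
      · refine ⟨a, Finset.mem_insert_self _ _, fun j hj => ?_⟩
        rcases Finset.mem_insert.mp hj with rfl | hj
        · exact (htot j (Finset.mem_insert_self _ _) j (Finset.mem_insert_self _ _)).elim id id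
        · exact htrans h (hbot j hj)

/-- Summation by parts comparison on a finite chain. -/
lemma chain_sum {ι : Type*} (r : ι → ι → Prop)
    (htrans : ∀ {i j k}, r i j → r j k → r i k)
    (p : ℝ) (hp : 0 < p) (f : ι → ℝ) :
    ∀ (n : ℕ) (s : Finset ι), s.card = n →
      (∀ i ∈ s, 0 ≤ f i) → (∀ i ∈ s, ∀ j ∈ s, r i j ∨ r j i) →
      min 1 p * ∑ i ∈ s, f i * (∑ j ∈ s.filter (fun j => r i j), f j) ^ (p - 1) ≤
          (∑ i ∈ s, f i) ^ p ∧
        (∑ i ∈ s, f i) ^ p ≤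
          max 1 p * ∑ i ∈ s, f i * (∑ j ∈ s.filter (fun j => r i j), f j) ^ (p - 1) := by
  intro n
  induction n using Nat.strong_induction_on with
  | _ n ih =>
    intro s hcard hf htot
    rcases s.eq_empty_or_nonempty with rfl | hne
    · simp [Real.zero_rpow hp.ne']
    · obtain ⟨i0, hi0, hmin⟩ := exists_bot r htrans s hne htot
      set M : Finset ι := s.filter (fun i => ∀ j ∈ s, r i j) with hM
      have hMne : M.Nonempty := ⟨i0, Finset.mem_filter.mpr ⟨hi0, hmin⟩⟩
      have hMs : M ⊆ s := Finset.filter_subset _ _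
      have hss : s \ M ⊂ s := Finset.sdiff_ssubset hMs hMne
      have hcard' : (s \ M).card < n := hcard ▸ Finset.card_lt_card hss
      have hs'sub : ∀ i ∈ s \ M, i ∈ s := fun i hi => (Finset.mem_sdiff.mp hi).1
      have hfiltM : ∀ i ∈ M, s.filter (fun j => r i j) = s := fun i hi =>
        Finset.filter_true_of_mem (Finset.mem_filter.mp hi).2
      have hfilts' : ∀ i ∈ s \ M,
          s.filter (fun j => r i j) = (s \ M).filter (fun j => r i j) := by
        intro i hi
        have hi2 := Finset.mem_sdiff.mp hi
        ext j
        constructor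
        · intro hj
          have hj2 := Finset.mem_filter.mp hj
          refine Finset.mem_filter.mpr ⟨Finset.mem_sdiff.mpr ⟨hj2.1, fun hjM => ?_⟩, hj2.2⟩
          exact hi2.2 (Finset.mem_filter.mpr ⟨hi2.1,
            fun k hk => htrans hj2.2 ((Finset.mem_filter.mp hjM).2 k hk)⟩)
        · intro hj
          have hj2 := Finset.mem_filter.mp hj
          exact Finset.mem_filter.mpr ⟨hs'sub j hj2.1, hj2.2⟩
      obtain ⟨k1, k2⟩ := ih (s \ M).card hcard' (s \ M) rfl (fun i hi => hf i (hs'sub i hi))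
        (fun i hi j hj => htot i (hs'sub i hi) j (hs'sub j hj))
      have hsplit : (∑ i ∈ s \ M, f i) + ∑ i ∈ M, f i = ∑ i ∈ s, f i := Finset.sum_sdiff hMs
      have hb0 : (0:ℝ) ≤ ∑ i ∈ M, f i := Finset.sum_nonneg fun i hi => hf i (hMs hi)
      have hS'0 : (0:ℝ) ≤ ∑ i ∈ s \ M, f i := Finset.sum_nonneg fun i hi => hf i (hs'sub i hi)
      have hS'S : (∑ i ∈ s \ M, f i) ≤ ∑ i ∈ s, f i := by linarith
      have hT : ∑ i ∈ s, f i * (∑ j ∈ s.filter (fun j => r i j), f j) ^ (p - 1)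
          = (∑ i ∈ s \ M, f i * (∑ j ∈ (s \ M).filter (fun j => r i j), f j) ^ (p - 1))
            + (∑ i ∈ M, f i) * (∑ i ∈ s, f i) ^ (p - 1) := by
        rw [← Finset.sum_sdiff hMs (f := fun i =>
          f i * (∑ j ∈ s.filter (fun j => r i j), f j) ^ (p - 1))]
        congr 1
        · exact Finset.sum_congr rfl fun i hi => by rw [hfilts' i hi]
        · calc ∑ i ∈ M, f i * (∑ j ∈ s.filter (fun j => r i j), f j) ^ (p - 1)
              = ∑ i ∈ M, f i * (∑ j ∈ s, f j) ^ (p - 1) :=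
                Finset.sum_congr rfl fun i hi => by rw [hfiltM i hi]
            _ = (∑ i ∈ M, f i) * (∑ i ∈ s, f i) ^ (p - 1) := (Finset.sum_mul _ _ _).symm
      obtain ⟨htp1, htp2⟩ := two_point hp hS'0 hS'S
      have hSb : (∑ i ∈ s, f i) - ∑ i ∈ s \ M, f i = ∑ i ∈ M, f i := by linarith
      rw [hSb] at htp1 htp2
      rw [hT, mul_add, mul_add]
      constructor
      · linarith
      · linarith

/-- Nestedness of dyadic cubes containing a common point. -/
lemma DyadicCube.subset_of_mem_of_le {d : ℕ} {Q R : DyadicCube d} {x : Fin d → ℝ}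
    (hQ : x ∈ Q.toSet) (hR : x ∈ R.toSet) (hk : Q.k ≤ R.k) : Q.toSet ⊆ R.toSet := by
  intro y hy i
  obtain ⟨h1, h2⟩ := hQ i
  obtain ⟨h3, h4⟩ := hR i
  obtain ⟨h5, h6⟩ := hy i
  set m : ℕ := (R.k - Q.k).toNat with hmdef
  have hm : (m : ℤ) = R.k - Q.k := Int.toNat_of_nonneg (by omega)
  have h2Q : (0:ℝ) < 2 ^ Q.k := zpow_pos (by norm_num) _
  have hpow : (2:ℝ) ^ R.k = 2 ^ Q.k * (2:ℝ) ^ (m:ℕ) := by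
    rw [← zpow_natCast (2:ℝ) m, ← zpow_add₀ (two_ne_zero)]
    congr 1
    omega
  -- first inequality
  have h7 : (2:ℝ) ^ Q.k * ((2:ℝ) ^ (m:ℕ) * (R.j i : ℝ)) < 2 ^ Q.k * ((Q.j i : ℝ) + 1) := by
    calc (2:ℝ) ^ Q.k * ((2:ℝ) ^ (m:ℕ) * (R.j i : ℝ)) = 2 ^ R.k * (R.j i : ℝ) := by
          rw [hpow]; ring
      _ ≤ x i := h3
      _ < _ := h2
  have h8 : (2:ℝ) ^ (m:ℕ) * (R.j i : ℝ) < (Q.j i : ℝ) + 1 := (mul_lt_mul_iff_right₀ h2Q).mp h7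
  have h9 : (2:ℤ) ^ m * R.j i < Q.j i + 1 := by exact_mod_cast h8
  have h10 : (2:ℤ) ^ m * R.j i ≤ Q.j i := by omega
  have key1 : (2:ℝ) ^ R.k * (R.j i : ℝ) ≤ 2 ^ Q.k * (Q.j i : ℝ) := by
    have h11 : ((2:ℝ) ^ (m:ℕ) * (R.j i : ℝ)) ≤ (Q.j i : ℝ) := by exact_mod_cast h10
    calc (2:ℝ) ^ R.k * (R.j i : ℝ) = 2 ^ Q.k * ((2:ℝ) ^ (m:ℕ) * (R.j i : ℝ)) := by
          rw [hpow]; ring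
      _ ≤ 2 ^ Q.k * (Q.j i : ℝ) := mul_le_mul_of_nonneg_left h11 h2Q.le
  -- second inequality
  have h7' : (2:ℝ) ^ Q.k * (Q.j i : ℝ) < 2 ^ Q.k * ((2:ℝ) ^ (m:ℕ) * ((R.j i : ℝ) + 1)) := by
    calc (2:ℝ) ^ Q.k * (Q.j i : ℝ) ≤ x i := h1
      _ < 2 ^ R.k * ((R.j i : ℝ) + 1) := h4
      _ = 2 ^ Q.k * ((2:ℝ) ^ (m:ℕ) * ((R.j i : ℝ) + 1)) := by rw [hpow]; ring
  have h8' : (Q.j i : ℝ) < (2:ℝ) ^ (m:ℕ) * ((R.j i : ℝ) + 1) := (mul_lt_mul_iff_right₀ h2Q).mp h7'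
  have h9' : Q.j i < (2:ℤ) ^ m * (R.j i + 1) := by exact_mod_cast h8'
  have h10' : Q.j i + 1 ≤ (2:ℤ) ^ m * (R.j i + 1) := by omega
  have key2 : (2:ℝ) ^ Q.k * ((Q.j i : ℝ) + 1) ≤ 2 ^ R.k * ((R.j i : ℝ) + 1) := by
    have h11' : ((Q.j i : ℝ) + 1) ≤ (2:ℝ) ^ (m:ℕ) * ((R.j i : ℝ) + 1) := by exact_mod_cast h10'
    calc (2:ℝ) ^ Q.k * ((Q.j i : ℝ) + 1)
        ≤ 2 ^ Q.k * ((2:ℝ) ^ (m:ℕ) * ((R.j i : ℝ) + 1)) := mul_le_mul_of_nonneg_left h11' h2Q.le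
      _ = 2 ^ R.k * ((R.j i : ℝ) + 1) := by rw [hpow]; ring
  exact ⟨le_trans key1 h5, lt_of_lt_of_le h6 key2⟩

/-- STATEMENT 0: pointwise summation-by-parts comparison
`(∑_Q a_Q 1_Q)^p ≍_p ∑_Q a_Q 1_Q · (∑_{R ⊇ Q} a_R 1_R)^(p-1)`. -/
theorem stmt1 (p : ℝ) (hp : 0 < p) :
    ∃ c C : ℝ, 0 < c ∧ 0 < C ∧
      ∀ (d : ℕ) (a : DyadicCube d → ℝ),
        (∀ Q, 0 ≤ a Q) → (Function.support a).Finite →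
        ∀ x : Fin d → ℝ,
          c * ∑ᶠ Q : DyadicCube d,
              Q.toSet.indicator (fun _ => a Q) x *
                (∑ᶠ (R : DyadicCube d) (_ : Q.toSet ⊆ R.toSet),
                    R.toSet.indicator (fun _ => a R) x) ^ (p - 1)
            ≤ (∑ᶠ Q : DyadicCube d, Q.toSet.indicator (fun _ => a Q) x) ^ p ∧
          (∑ᶠ Q : DyadicCube d, Q.toSet.indicator (fun _ => a Q) x) ^ p ≤
            C * ∑ᶠ Q : DyadicCube d,
              Q.toSet.indicator (fun _ => a Q) x *
                (∑ᶠ (R : DyadicCube d) (_ : Q.toSet ⊆ R.toSet),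
                    R.toSet.indicator (fun _ => a R) x) ^ (p - 1) := by
  refine ⟨min 1 p, max 1 p, lt_min one_pos hp, lt_of_lt_of_le one_pos (le_max_left 1 p), ?_⟩
  intro d a ha hfin x
  set s : Finset (DyadicCube d) := hfin.toFinset.filter (fun Q => x ∈ Q.toSet) with hsdef
  have hmem : ∀ Q ∈ s, x ∈ Q.toSet := by
    intro Q hQ
    exact (Finset.mem_filter.mp hQ).2
  have hsupp : Function.support (fun Q : DyadicCube d => Q.toSet.indicator (fun _ => a Q) x)
      ⊆ ↑s := by
    intro Q hQ
    rw [Function.mem_support] at hQ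
    by_cases hx : x ∈ Q.toSet
    · have haQ : a Q ≠ 0 := by
        intro h0
        apply hQ
        simp [Set.indicator_of_mem hx, h0]
      simp only [hsdef, Finset.coe_filter, Set.mem_setOf_eq, Set.Finite.mem_toFinset]
      exact ⟨haQ, hx⟩
    · exact absurd (Set.indicator_of_notMem hx _) hQ
  have hsum1 : ∑ᶠ Q : DyadicCube d, Q.toSet.indicator (fun _ => a Q) x
      = ∑ Q ∈ s, Q.toSet.indicator (fun _ => a Q) x :=
    finsum_eq_sum_of_support_subset _ hsupp
  have hinner : ∀ Q : DyadicCube d,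
      (∑ᶠ (R : DyadicCube d) (_ : Q.toSet ⊆ R.toSet), R.toSet.indicator (fun _ => a R) x)
        = ∑ R ∈ s.filter (fun R => Q.toSet ⊆ R.toSet), R.toSet.indicator (fun _ => a R) x := by
    intro Q
    have hif : ∀ R : DyadicCube d,
        (∑ᶠ (_ : Q.toSet ⊆ R.toSet), R.toSet.indicator (fun _ => a R) x)
          = if Q.toSet ⊆ R.toSet then R.toSet.indicator (fun _ => a R) x else 0 :=
      fun R => finsum_eq_if
    rw [finsum_congr hif]
    have hsupp2 : Function.support (fun R : DyadicCube d =>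
        if Q.toSet ⊆ R.toSet then R.toSet.indicator (fun _ => a R) x else 0) ⊆ ↑s := by
      intro R hR
      rw [Function.mem_support] at hR
      apply hsupp
      rw [Function.mem_support]
      intro h0
      apply hR
      simp [h0]
    rw [finsum_eq_sum_of_support_subset _ hsupp2]
    exact (Finset.sum_filter _ _).symm
  have hsupp3 : Function.support (fun Q : DyadicCube d =>
      Q.toSet.indicator (fun _ => a Q) x *
        (∑ᶠ (R : DyadicCube d) (_ : Q.toSet ⊆ R.toSet),
          R.toSet.indicator (fun _ => a R) x) ^ (p - 1)) ⊆ ↑s := by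
    intro Q hQ
    rw [Function.mem_support] at hQ
    apply hsupp
    rw [Function.mem_support]
    intro h0
    apply hQ
    rw [h0, zero_mul]
  have hsum2 : (∑ᶠ Q : DyadicCube d,
      Q.toSet.indicator (fun _ => a Q) x *
        (∑ᶠ (R : DyadicCube d) (_ : Q.toSet ⊆ R.toSet),
          R.toSet.indicator (fun _ => a R) x) ^ (p - 1))
      = ∑ Q ∈ s, Q.toSet.indicator (fun _ => a Q) x *
          (∑ R ∈ s.filter (fun R => Q.toSet ⊆ R.toSet),
            R.toSet.indicator (fun _ => a R) x) ^ (p - 1) := by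
    rw [finsum_eq_sum_of_support_subset _ hsupp3]
    exact Finset.sum_congr rfl fun Q _ => by rw [hinner Q]
  rw [hsum1, hsum2]
  have htot : ∀ Q ∈ s, ∀ R ∈ s, Q.toSet ⊆ R.toSet ∨ R.toSet ⊆ Q.toSet := by
    intro Q hQ R hR
    rcases le_total Q.k R.k with h | h
    · exact Or.inl (DyadicCube.subset_of_mem_of_le (hmem Q hQ) (hmem R hR) h)
    · exact Or.inr (DyadicCube.subset_of_mem_of_le (hmem R hR) (hmem Q hQ) h)
  exact chain_sum (fun Q R : DyadicCube d => Q.toSet ⊆ R.toSet)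
    (fun hij hjk => Set.Subset.trans hij hjk) p hp
    (fun Q => Q.toSet.indicator (fun _ => a Q) x) s.card s rfl
    (fun Q _ => Set.indicator_nonneg (fun _ _ => ha Q) x) htot
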